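/- Let n ≥ 1, let λ ∈ ℝ^n, and let A(λ) be the lower triangular Toeplitz matrix with coefficient vector λ. Let 1 ≤ b ≤ n and θ ∈ ℝ^b with θ_1 ≠ 0, and set w = C(θ)^{-1}·λ ∈ ℝ^n. Then the squared Frobenius norm of A(λ)·C(θ)^{-1} equals Σ_{i=1}^{n} (n−i+1)·w_i². -/
import Mathlib


/-- The `n × n` lower triangular Toeplitz matrix with coefficient vector `c`
(0-indexed: `M i j = c (i - j)` for `j ≤ i`, and `0` for `j > i`). -/
def ltToeplitz (n : ℕ) (c : Fin n → ℝ) : Matrix (Fin n) (Fin n) ℝ :=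
  fun i j =>
    if h : (j : ℕ) ≤ (i : ℕ) then
      c ⟨(i : ℕ) - (j : ℕ), Nat.lt_of_le_of_lt (Nat.sub_le _ _) i.isLt⟩
    else 0

/-- The `b`-banded lower triangular Toeplitz matrix `C(θ)` with coefficients
`θ` (0-indexed: `C i j = θ (i - j)` when `0 ≤ i - j ≤ b - 1`, else `0`). -/
def bandedToeplitz (n b : ℕ) (θ : Fin b → ℝ) : Matrix (Fin n) (Fin n) ℝ :=
  fun i j =>
    if h : (j : ℕ) ≤ (i : ℕ) ∧ (i : ℕ) - (j : ℕ) < b then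
      θ ⟨(i : ℕ) - (j : ℕ), h.2⟩
    else 0

/-- Extension of a `Fin n`-vector to `ℕ` by zero. -/
def extv (n : ℕ) (v : Fin n → ℝ) : ℕ → ℝ := fun m => if h : m < n then v ⟨m, h⟩ else 0

lemma extv_coe {n : ℕ} (v : Fin n → ℝ) (i : Fin n) : extv n v i = v i := by
  simp [extv, i.isLt]

lemma ltToeplitz_apply (n : ℕ) (c : Fin n → ℝ) (i j : Fin n) :
    ltToeplitz n c i j = if (j : ℕ) ≤ (i : ℕ) then extv n c ((i : ℕ) - (j : ℕ)) else 0 := by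
  unfold ltToeplitz extv
  split_ifs with h h'
  · rfl
  · exact absurd (Nat.lt_of_le_of_lt (Nat.sub_le _ _) i.isLt) h'
  · rfl

/-- The banded Toeplitz matrix is a lower-triangular Toeplitz matrix with padded
coefficients. -/
lemma bandedToeplitz_eq (n b : ℕ) (hbn : b ≤ n) (θ : Fin b → ℝ) :
    bandedToeplitz n b θ =
      ltToeplitz n (fun k => if h : (k : ℕ) < b then θ ⟨k, h⟩ else 0) := by
  funext i j
  unfold bandedToeplitz ltToeplitz
  by_cases h1 : (j : ℕ) ≤ (i : ℕ)
  · by_cases h2 : (i : ℕ) - (j : ℕ) < b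
    · rw [dif_pos ⟨h1, h2⟩, dif_pos h1]
      simp only []
      rw [dif_pos h2]
    · rw [dif_neg (by tauto), dif_pos h1]
      simp only []
      rw [dif_neg h2]
  · rw [dif_neg (by tauto), dif_neg h1]

/-- Product of lower-triangular Toeplitz matrices. -/
lemma ltToeplitz_mul (n : ℕ) (a c : Fin n → ℝ) :
    ltToeplitz n a * ltToeplitz n c =
      ltToeplitz n (fun k =>
        ∑ t ∈ Finset.range ((k : ℕ) + 1), extv n a t * extv n c ((k : ℕ) - t)) := by
  funext i j
  rw [Matrix.mul_apply, ltToeplitz_apply]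
  have : ∀ k : Fin n, ltToeplitz n a i k * ltToeplitz n c k j =
      (fun k : ℕ => (if k ≤ (i : ℕ) then extv n a ((i : ℕ) - k) else 0) *
        (if (j : ℕ) ≤ k then extv n c (k - (j : ℕ)) else 0)) (k : ℕ) := by
    intro k; rw [ltToeplitz_apply, ltToeplitz_apply]
  rw [Finset.sum_congr rfl (fun k _ => this k),
    Fin.sum_univ_eq_sum_range (fun k : ℕ =>
      (if k ≤ (i : ℕ) then extv n a ((i : ℕ) - k) else 0) *
        (if (j : ℕ) ≤ k then extv n c (k - (j : ℕ)) else 0)) n]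
  set G : ℕ → ℝ := fun k => (if k ≤ (i : ℕ) then extv n a ((i : ℕ) - k) else 0) *
      (if (j : ℕ) ≤ k then extv n c (k - (j : ℕ)) else 0) with hG
  by_cases hji : (j : ℕ) ≤ (i : ℕ)
  · rw [if_pos hji]
    have hsub : Finset.Ico (j : ℕ) ((i : ℕ) + 1) ⊆ Finset.range n := by
      intro k hk
      simp only [Finset.mem_Ico, Finset.mem_range] at *
      omega
    have h1 : ∑ k ∈ Finset.range n, G k = ∑ k ∈ Finset.Ico (j : ℕ) ((i : ℕ) + 1), G k := by
      refine (Finset.sum_subset hsub fun k _ hk => ?_).symm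
      simp only [Finset.mem_Ico, not_and_or, not_lt, not_le] at hk
      simp only [hG]
      rcases hk with hk | hk
      · rw [if_neg (show ¬ (j : ℕ) ≤ k by omega)]; ring
      · rw [if_neg (show ¬ k ≤ (i : ℕ) by omega)]; ring
    rw [h1, Finset.sum_Ico_eq_sum_range]
    have h2 : ∀ t ∈ Finset.range ((i : ℕ) + 1 - (j : ℕ)), G ((j : ℕ) + t) =
        extv n a ((i : ℕ) - (j : ℕ) - t) * extv n c t := by
      intro t ht
      simp only [Finset.mem_range] at ht
      simp only [hG]
      rw [if_pos (by omega), if_pos (by omega)]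
      congr 2 <;> omega
    rw [Finset.sum_congr rfl h2]
    have h3 : (i : ℕ) + 1 - (j : ℕ) = ((i : ℕ) - (j : ℕ)) + 1 := by omega
    rw [h3]
    have h4 := Finset.sum_range_reflect
      (fun t => extv n a t * extv n c ((i : ℕ) - (j : ℕ) - t)) (((i : ℕ) - (j : ℕ)) + 1)
    have hlt : (i : ℕ) - (j : ℕ) < n := Nat.lt_of_le_of_lt (Nat.sub_le _ _) i.isLt
    rw [extv, dif_pos hlt]
    rw [← h4]
    refine Finset.sum_congr rfl fun t ht => ?_
    simp only [Finset.mem_range] at ht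
    congr 2 <;> omega
  · rw [if_neg hji]
    refine Finset.sum_eq_zero fun k hk => ?_
    show (if k ≤ (i : ℕ) then extv n a ((i : ℕ) - k) else 0) *
      (if (j : ℕ) ≤ k then extv n c (k - (j : ℕ)) else 0) = 0
    by_cases h1 : k ≤ (i : ℕ)
    · rw [if_neg (show ¬ (j : ℕ) ≤ k by omega)]; ring
    · rw [if_neg h1]; ring

/-- mulVec of a lower-triangular Toeplitz matrix. -/
lemma ltToeplitz_mulVec (n : ℕ) (c v : Fin n → ℝ) (i : Fin n) :
    (ltToeplitz n c).mulVec v i =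
      ∑ t ∈ Finset.range ((i : ℕ) + 1), extv n c ((i : ℕ) - t) * extv n v t := by
  unfold Matrix.mulVec dotProduct
  have : ∀ k : Fin n, ltToeplitz n c i k * v k =
      (fun k : ℕ => (if k ≤ (i : ℕ) then extv n c ((i : ℕ) - k) else 0) * extv n v k) (k : ℕ) := by
    intro k
    show ltToeplitz n c i k * v k =
      (if (k : ℕ) ≤ (i : ℕ) then extv n c ((i : ℕ) - (k : ℕ)) else 0) * extv n v (k : ℕ)
    rw [ltToeplitz_apply, extv_coe]
  rw [Finset.sum_congr rfl (fun k _ => this k),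
    Fin.sum_univ_eq_sum_range (fun k : ℕ =>
      (if k ≤ (i : ℕ) then extv n c ((i : ℕ) - k) else 0) * extv n v k) n]
  have hsub : Finset.range ((i : ℕ) + 1) ⊆ Finset.range n := by
    intro k hk; simp only [Finset.mem_range] at *; omega
  rw [← Finset.sum_subset hsub]
  · refine Finset.sum_congr rfl fun t ht => ?_
    simp only [Finset.mem_range] at ht
    rw [if_pos (by omega)]
  · intro k _ hk
    simp only [Finset.mem_range, not_lt] at hk
    rw [if_neg (by omega)]; ring

lemma sum_sum_range (g : ℕ → ℝ) (N : ℕ) :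
    ∑ i ∈ Finset.range N, ∑ j ∈ Finset.range (i + 1), g j =
      ∑ j ∈ Finset.range N, ((N - j : ℕ) : ℝ) * g j := by
  induction N with
  | zero => simp
  | succ N ih =>
    rw [Finset.sum_range_succ, ih, Finset.sum_range_succ (fun j => ((N + 1 - j : ℕ) : ℝ) * g j)]
    have h1 : ((N + 1 - N : ℕ) : ℝ) = 1 := by norm_num
    rw [h1, one_mul, Finset.sum_range_succ g, ← add_assoc]
    congr 1
    rw [← Finset.sum_add_distrib]
    refine Finset.sum_congr rfl fun j hj => ?_
    simp only [Finset.mem_range] at hj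
    have : (N + 1 - j : ℕ) = (N - j) + 1 := by omega
    rw [this]
    push_cast
    ring

theorem frobenius_sq_toeplitz_workload_mul_banded_toeplitz_inverse (n b : ℕ)
    (hn : 1 ≤ n) (hb : 1 ≤ b) (hbn : b ≤ n)
    (lam : Fin n → ℝ) (θ : Fin b → ℝ) (hθ : θ ⟨0, hb⟩ ≠ 0)
    (w : Fin n → ℝ)
    (hw : w = Matrix.mulVec (bandedToeplitz n b θ)⁻¹ lam) :
    ∑ i : Fin n, ∑ j : Fin n,
        ((ltToeplitz n lam * (bandedToeplitz n b θ)⁻¹) i j) ^ 2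
      = ∑ i : Fin n, ((n - (i : ℕ) : ℕ) : ℝ) * (w i) ^ 2 := by
  set C := bandedToeplitz n b θ with hC
  -- invertibility
  have hdiag : ∀ i : Fin n, C i i = θ ⟨0, hb⟩ := by
    intro i
    unfold C
    unfold bandedToeplitz
    rw [dif_pos ⟨le_refl _, by omega⟩]
    congr 1
    simp [Nat.sub_self]
  have htri : C.BlockTriangular OrderDual.toDual := by
    intro i j hij
    unfold C
    unfold bandedToeplitz
    rw [dif_neg]
    simp only [OrderDual.toDual_lt_toDual] at hij
    rw [Fin.lt_def] at hij
    omega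
  have hdet : C.det ≠ 0 := by
    rw [Matrix.det_of_lowerTriangular C htri]
    rw [Finset.prod_congr rfl fun i _ => hdiag i, Finset.prod_const]
    exact pow_ne_zero _ hθ
  have hunit : IsUnit C.det := isUnit_iff_ne_zero.mpr hdet
  -- lam = C.mulVec w
  have hlam : C.mulVec w = lam := by
    rw [hw, Matrix.mulVec_mulVec, Matrix.mul_nonsing_inv C hunit, Matrix.one_mulVec]
  -- padded coefficients
  set θp : Fin n → ℝ := fun k => if h : (k : ℕ) < b then θ ⟨k, h⟩ else 0 with hθp
  have hCe : C = ltToeplitz n θp := bandedToeplitz_eq n b hbn θ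
  -- A(lam) = A(w) * C
  have hcoef : (fun k : Fin n =>
      ∑ t ∈ Finset.range ((k : ℕ) + 1), extv n w t * extv n θp ((k : ℕ) - t)) = lam := by
    funext k
    rw [← hlam, hCe, ltToeplitz_mulVec]
    exact Finset.sum_congr rfl fun t _ => mul_comm _ _
  have hkey : ltToeplitz n lam = ltToeplitz n w * C := by
    rw [hCe, ltToeplitz_mul, hcoef]
  have hprod : ltToeplitz n lam * C⁻¹ = ltToeplitz n w := by
    rw [hkey, Matrix.mul_assoc, Matrix.mul_nonsing_inv C hunit, Matrix.mul_one]
  rw [hprod]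
  -- Frobenius norm computation
  have hrow : ∀ i : Fin n, ∑ j : Fin n, (ltToeplitz n w i j) ^ 2 =
      ∑ j ∈ Finset.range ((i : ℕ) + 1), (extv n w j) ^ 2 := by
    intro i
    have : ∀ j : Fin n, (ltToeplitz n w i j) ^ 2 =
        (fun j : ℕ => (if j ≤ (i : ℕ) then extv n w ((i : ℕ) - j) else 0) ^ 2) (j : ℕ) := by
      intro j
      rw [ltToeplitz_apply]
    rw [Finset.sum_congr rfl (fun j _ => this j),
      Fin.sum_univ_eq_sum_range (fun j : ℕ =>
        (if j ≤ (i : ℕ) then extv n w ((i : ℕ) - j) else 0) ^ 2) n]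
    have hsub : Finset.range ((i : ℕ) + 1) ⊆ Finset.range n := by
      intro k hk; simp only [Finset.mem_range] at *; omega
    rw [← Finset.sum_subset hsub]
    · have h4 := Finset.sum_range_reflect (fun t => (extv n w t) ^ 2) ((i : ℕ) + 1)
      rw [← h4]
      refine Finset.sum_congr rfl fun t ht => ?_
      simp only [Finset.mem_range] at ht
      rw [if_pos (by omega)]
      have he : (i : ℕ) + 1 - 1 - t = (i : ℕ) - t := by omega
      rw [he]
    · intro k _ hk
      simp only [Finset.mem_range, not_lt] at hk
      rw [if_neg (by omega)]
      norm_num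
  rw [Finset.sum_congr rfl (fun i _ => hrow i)]
  rw [Fin.sum_univ_eq_sum_range (fun i => ∑ j ∈ Finset.range (i + 1), (extv n w j) ^ 2) n]
  rw [sum_sum_range (fun j => (extv n w j) ^ 2) n]
  rw [← Fin.sum_univ_eq_sum_range (fun j => ((n - j : ℕ) : ℝ) * (extv n w j) ^ 2) n]
  exact Finset.sum_congr rfl fun i _ => by rw [extv_coe]
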